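/- Let x = d·b·a1 ≥ 0 and define the equilibrium IoTSP payoffs (scaled by d): U_push(x) = ((D_max + x)/6)² for x < 5D_max and U_push(x) = D_max² for x ≥ 5D_max; U_pull(x) = ((D_max + x)/4)² for x ≤ D_max/3 and U_pull(x) = x·D_max/3 for x > D_max/3; U_hybrid(x) = ((D_max + x)/6)² for x < 2D_max and U_hybrid(x) = D_max²/4 for x ≥ 2D_max. Then for all x ≥ 0: U_pull(x) > U_push(x) ≥ U_hybrid(x), with U_push(x) = U_hybrid(x) exactly when x ≤ 2D_max. -/

import Mathlib

/-- Comparison of the IoTSP's equilibrium payoff (scaled by d) across the push,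
pull and hybrid models, as functions of x = d·b·a1. -/
theorem iot_payoff_comparison
    (Dmax : ℝ) (hDmax : 0 < Dmax)
    (Upush Upull Uhybrid : ℝ → ℝ)
    (hpush : ∀ x, Upush x = if x < 5*Dmax then ((Dmax + x)/6)^2 else Dmax^2)
    (hpull : ∀ x, Upull x = if x ≤ Dmax/3 then ((Dmax + x)/4)^2 else x*Dmax/3)
    (hhybrid : ∀ x, Uhybrid x = if x < 2*Dmax then ((Dmax + x)/6)^2 else Dmax^2/4) :
    ∀ x, 0 ≤ x →
      Upush x < Upull x ∧
      Uhybrid x ≤ Upush x ∧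
      (Upush x = Uhybrid x ↔ x ≤ 2*Dmax) := by
  intro x hx
  rw [hpush, hpull, hhybrid]
  clear hpush hpull hhybrid
  refine ⟨?_, ?_, ?_⟩
  · split_ifs with h1 h2 h2 <;> (try push_neg at *) <;>
      nlinarith [sq_nonneg (Dmax + x), sq_nonneg (Dmax - x)]
  · split_ifs with h1 h2 h2 <;> (try push_neg at *) <;>
      nlinarith [sq_nonneg (Dmax + x), sq_nonneg (Dmax - x)]
  · constructor
    · intro h
      by_contra hc
      push_neg at hc
      split_ifs at h with h1 h2 h2 <;> (try push_neg at *) <;>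
        nlinarith [sq_nonneg (Dmax + x), sq_nonneg (Dmax - x)]
    · intro h
      split_ifs with h1 h2 h2 <;> (try push_neg at *) <;>
        nlinarith [sq_nonneg (Dmax + x), sq_nonneg (Dmax - x)]
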